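/- arXiv:1101.3989 — 3 statements merged into one kernel-verified Lean document; each statement's English description precedes it below -/
import Mathlib

section
/- Let G be a group, α: G → ℤ a homomorphism, and ρ: G → SL(2,ℂ) an α-binary-dihedral homomorphism. Then there exist an α-binary-dihedral homomorphism ρ': G → SL(2,ℂ) and a ℂ-linear isomorphism φ: sl₂(ℂ) → ℂ ⊕ ℂ² such that for every g ∈ G, the conjugated map φ ∘ Ad_{ρ(g)} ∘ φ⁻¹ is the direct sum of multiplication by (−1)^{α(g)} on the summand ℂ and the linear endomorphism of ℂ² given by the matrix i^{α(g)} · ρ'(g), where i = √−1. In other words, Ad ∘ ρ is conjugate, as a 3-dimensional complex representation of G, to the direct sum (−1)^{α(·)} ⊕ (√−1)^{α(·)} ρ'. -/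
open Matrix

abbrev SL2C := Matrix.SpecialLinearGroup (Fin 2) ℂ

/-- An element of `SL(2,ℂ)` is diagonal if its off-diagonal entries vanish. -/
def IsDiag' (A : SL2C) : Prop :=
  (A : Matrix (Fin 2) (Fin 2) ℂ) 0 1 = 0 ∧ (A : Matrix (Fin 2) (Fin 2) ℂ) 1 0 = 0

/-- An element of `SL(2,ℂ)` is antidiagonal if its diagonal entries vanish. -/
def IsAnti' (A : SL2C) : Prop :=
  (A : Matrix (Fin 2) (Fin 2) ℂ) 0 0 = 0 ∧ (A : Matrix (Fin 2) (Fin 2) ℂ) 1 1 = 0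

/-- Given a homomorphism `α : G → ℤ`, a homomorphism `ρ : G → SL(2,ℂ)` is
`α`-binary-dihedral if `ρ g` is diagonal whenever `α g` is even, and antidiagonal
whenever `α g` is odd. -/
def IsBinaryDihedral {G : Type} [Group G] (α : G → ℤ) (ρ : G →* SL2C) : Prop :=
  ∀ g : G, (Even (α g) → IsDiag' (ρ g)) ∧ (Odd (α g) → IsAnti' (ρ g))

/-- `sl₂(ℂ)`: the space of trace-free complex `2 × 2` matrices. -/
noncomputable def sl2C : Submodule ℂ (Matrix (Fin 2) (Fin 2) ℂ) :=
  LinearMap.ker (Matrix.traceLinearMap (Fin 2) ℂ ℂ)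

/-- The matrix of `Ad A` on the span of `E, F` (for diag/antidiag `A`). -/
noncomputable def MM (A : Matrix (Fin 2) (Fin 2) ℂ) : Matrix (Fin 2) (Fin 2) ℂ :=
  !![A 0 0 ^ 2, -A 0 1 ^ 2; -A 1 0 ^ 2, A 1 1 ^ 2]

lemma MM_mul (A B : Matrix (Fin 2) (Fin 2) ℂ)
    (hA1 : A 0 0 * A 0 1 = 0) (hA2 : A 1 0 * A 1 1 = 0) :
    MM (A * B) = MM A * MM B := by
  ext i j
  fin_cases i <;> fin_cases j <;>
    simp [MM, Matrix.mul_apply, Fin.sum_univ_two]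
  · linear_combination (2 * B 0 0 * B 1 0) * hA1
  · linear_combination (-2 * B 0 1 * B 1 1) * hA1
  · linear_combination (-2 * B 0 0 * B 1 0) * hA2
  · linear_combination (2 * B 0 1 * B 1 1) * hA2

/-- The coordinate map `sl₂ → ℂ × ℂ²`. -/
noncomputable def phiL : sl2C →ₗ[ℂ] ℂ × (Fin 2 → ℂ) where
  toFun v := ((v : Matrix (Fin 2) (Fin 2) ℂ) 0 0,
    ![(v : Matrix (Fin 2) (Fin 2) ℂ) 0 1, (v : Matrix (Fin 2) (Fin 2) ℂ) 1 0])
  map_add' v w := by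
    refine Prod.ext (by simp) ?_
    funext i; fin_cases i <;> simp
  map_smul' c v := by
    refine Prod.ext (by simp) ?_
    funext i; fin_cases i <;> simp

/-- The inverse coordinate map `ℂ × ℂ² → sl₂`. -/
noncomputable def psiL : (ℂ × (Fin 2 → ℂ)) →ₗ[ℂ] sl2C where
  toFun p := ⟨!![p.1, p.2 0; p.2 1, -p.1], by
    simp [sl2C, LinearMap.mem_ker, Matrix.trace_fin_two_of]⟩
  map_add' p q := by
    apply Subtype.ext
    ext i j
    fin_cases i <;> fin_cases j <;> simp [Matrix.add_apply] <;> ring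
  map_smul' c p := by
    apply Subtype.ext
    ext i j
    fin_cases i <;> fin_cases j <;> simp [Matrix.smul_apply]

lemma sl2C_trace (v : sl2C) :
    (v : Matrix (Fin 2) (Fin 2) ℂ) 1 1 = -(v : Matrix (Fin 2) (Fin 2) ℂ) 0 0 := by
  have h := v.2
  simp only [sl2C, LinearMap.mem_ker, Matrix.traceLinearMap_apply,
    Matrix.trace_fin_two] at h
  linear_combination h

/-- The coordinate linear equivalence `sl₂ ≃ ℂ × ℂ²`. -/
noncomputable def phiE : sl2C ≃ₗ[ℂ] ℂ × (Fin 2 → ℂ) :=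
  LinearEquiv.ofLinear phiL psiL
    (by
      apply LinearMap.ext
      intro p
      refine Prod.ext (by simp [phiL, psiL]) ?_
      funext i; fin_cases i <;> simp [phiL, psiL])
    (by
      apply LinearMap.ext
      intro v
      apply Subtype.ext
      ext i j
      fin_cases i <;> fin_cases j <;>
        simp [phiL, psiL, sl2C_trace v])

lemma hI2 (n : ℤ) : (Complex.I ^ (-n)) ^ 2 * (-1 : ℂ) ^ n = 1 := by
  have h1 : ((-1 : ℂ)) ^ n = Complex.I ^ (2 * n) := by
    rw [_root_.zpow_mul, show Complex.I ^ (2 : ℤ) = -1 from by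
      rw [zpow_two, Complex.I_mul_I]]
  rw [h1, ← zpow_natCast (Complex.I ^ (-n)) 2, ← _root_.zpow_mul,
    ← zpow_add₀ Complex.I_ne_zero, show -n * (2:ℕ) + 2 * n = 0 from by push_cast; ring, zpow_zero]

/-- for any `α`-binary-dihedral `ρ : G → SL(2,ℂ)` there are an
`α`-binary-dihedral `ρ' : G → SL(2,ℂ)` and a `ℂ`-linear isomorphism
`φ : sl₂(ℂ) ≃ ℂ ⊕ ℂ²` conjugating `Ad ∘ ρ` to the direct sum of the character
`(−1)^{α(·)}` on `ℂ` and the representation `(√−1)^{α(·)} ρ'` on `ℂ²`. -/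
theorem stmt6 (G : Type) [Group G] (α : G → ℤ) (hα : ∀ a b : G, α (a * b) = α a + α b)
    (ρ : G →* SL2C) (hρ : IsBinaryDihedral α ρ) :
    ∃ ρ' : G →* SL2C, IsBinaryDihedral α ρ' ∧
      ∃ φ : sl2C ≃ₗ[ℂ] ℂ × (Fin 2 → ℂ),
        ∀ g : G, ∀ v w : sl2C,
          (w : Matrix (Fin 2) (Fin 2) ℂ) =
            (ρ g : Matrix (Fin 2) (Fin 2) ℂ) * (v : Matrix (Fin 2) (Fin 2) ℂ) *
              (((ρ g)⁻¹ : SL2C) : Matrix (Fin 2) (Fin 2) ℂ) →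
          φ w = (((-1 : ℂ) ^ (α g)) * (φ v).1,
                 (Complex.I ^ (α g)) •
                   ((ρ' g : Matrix (Fin 2) (Fin 2) ℂ).mulVec (φ v).2)) := by
  have hdet : ∀ g : G, (ρ g : Matrix (Fin 2) (Fin 2) ℂ) 0 0 *
      (ρ g : Matrix (Fin 2) (Fin 2) ℂ) 1 1 - (ρ g : Matrix (Fin 2) (Fin 2) ℂ) 0 1 *
      (ρ g : Matrix (Fin 2) (Fin 2) ℂ) 1 0 = 1 := by
    intro g
    have h := (ρ g).2
    rw [Matrix.det_fin_two] at h
    exact h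
  have hprod : ∀ g : G,
      (ρ g : Matrix (Fin 2) (Fin 2) ℂ) 0 0 * (ρ g : Matrix (Fin 2) (Fin 2) ℂ) 0 1 = 0 ∧
      (ρ g : Matrix (Fin 2) (Fin 2) ℂ) 1 0 * (ρ g : Matrix (Fin 2) (Fin 2) ℂ) 1 1 = 0 ∧
      (ρ g : Matrix (Fin 2) (Fin 2) ℂ) 0 0 * (ρ g : Matrix (Fin 2) (Fin 2) ℂ) 1 0 = 0 ∧
      (ρ g : Matrix (Fin 2) (Fin 2) ℂ) 0 1 * (ρ g : Matrix (Fin 2) (Fin 2) ℂ) 1 1 = 0 := by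
    intro g
    rcases Int.even_or_odd (α g) with h | h
    · obtain ⟨h1, h2⟩ := (hρ g).1 h
      refine ⟨?_, ?_, ?_, ?_⟩ <;> simp [h1, h2]
    · obtain ⟨h1, h2⟩ := (hρ g).2 h
      refine ⟨?_, ?_, ?_, ?_⟩ <;> simp [h1, h2]
  have hsign : ∀ g : G, ((-1 : ℂ)) ^ (α g) =
      (ρ g : Matrix (Fin 2) (Fin 2) ℂ) 0 0 * (ρ g : Matrix (Fin 2) (Fin 2) ℂ) 1 1 +
      (ρ g : Matrix (Fin 2) (Fin 2) ℂ) 0 1 * (ρ g : Matrix (Fin 2) (Fin 2) ℂ) 1 0 := by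
    intro g
    rcases Int.even_or_odd (α g) with h | h
    · obtain ⟨h1, h2⟩ := (hρ g).1 h
      rw [Even.neg_one_zpow h]
      linear_combination (-1 : ℂ) * hdet g -
        2 * (ρ g : Matrix (Fin 2) (Fin 2) ℂ) 1 0 * h1
    · obtain ⟨h1, h2⟩ := (hρ g).2 h
      rw [Odd.neg_one_zpow h]
      linear_combination hdet g - 2 * (ρ g : Matrix (Fin 2) (Fin 2) ℂ) 1 1 * h1
  have hdet' : ∀ g : G,
      (Complex.I ^ (-α g) • MM (ρ g : Matrix (Fin 2) (Fin 2) ℂ)).det = 1 := by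
    intro g
    rw [Matrix.det_smul]
    have hMM : (MM (ρ g : Matrix (Fin 2) (Fin 2) ℂ)).det = (-1 : ℂ) ^ (α g) := by
      rw [MM, Matrix.det_fin_two_of, hsign g]
      linear_combination ((ρ g : Matrix (Fin 2) (Fin 2) ℂ) 0 0 *
        (ρ g : Matrix (Fin 2) (Fin 2) ℂ) 1 1 + (ρ g : Matrix (Fin 2) (Fin 2) ℂ) 0 1 *
        (ρ g : Matrix (Fin 2) (Fin 2) ℂ) 1 0) * hdet g
    rw [hMM, Fintype.card_fin]
    exact hI2 (α g)
  refine ⟨MonoidHom.mk'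
      (fun g => ⟨Complex.I ^ (-α g) • MM (ρ g : Matrix (Fin 2) (Fin 2) ℂ), hdet' g⟩) ?_,
      ?_, phiE, ?_⟩
  · -- multiplicativity
    intro g h
    apply Subtype.ext
    show Complex.I ^ (-α (g * h)) • MM ((ρ (g * h) : Matrix (Fin 2) (Fin 2) ℂ)) =
      (Complex.I ^ (-α g) • MM (ρ g : Matrix (Fin 2) (Fin 2) ℂ)) *
        (Complex.I ^ (-α h) • MM (ρ h : Matrix (Fin 2) (Fin 2) ℂ))
    have hAB : (ρ (g * h) : Matrix (Fin 2) (Fin 2) ℂ) =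
        (ρ g : Matrix (Fin 2) (Fin 2) ℂ) * (ρ h : Matrix (Fin 2) (Fin 2) ℂ) := by
      rw [_root_.map_mul, Matrix.SpecialLinearGroup.coe_mul]
    rw [hAB, MM_mul _ _ (hprod g).1 (hprod g).2.1, hα, neg_add,
      zpow_add₀ Complex.I_ne_zero, Matrix.smul_mul, Matrix.mul_smul, smul_smul]
  · -- binary dihedral
    intro g
    constructor
    · intro h
      obtain ⟨h1, h2⟩ := (hρ g).1 h
      constructor
      · show (Complex.I ^ (-α g) • MM (ρ g : Matrix (Fin 2) (Fin 2) ℂ)) 0 1 = 0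
        simp [MM, Matrix.smul_apply, h1]
      · show (Complex.I ^ (-α g) • MM (ρ g : Matrix (Fin 2) (Fin 2) ℂ)) 1 0 = 0
        simp [MM, Matrix.smul_apply, h2]
    · intro h
      obtain ⟨h1, h2⟩ := (hρ g).2 h
      constructor
      · show (Complex.I ^ (-α g) • MM (ρ g : Matrix (Fin 2) (Fin 2) ℂ)) 0 0 = 0
        simp [MM, Matrix.smul_apply, h1]
      · show (Complex.I ^ (-α g) • MM (ρ g : Matrix (Fin 2) (Fin 2) ℂ)) 1 1 = 0
        simp [MM, Matrix.smul_apply, h2]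
  · -- the conjugation identity
    intro g v w hw
    rw [Matrix.SpecialLinearGroup.coe_inv, Matrix.adjugate_fin_two] at hw
    have e00 := congrFun (congrFun hw 0) 0
    have e01 := congrFun (congrFun hw 0) 1
    have e10 := congrFun (congrFun hw 1) 0
    simp only [Matrix.mul_apply, Fin.sum_univ_two, Matrix.cons_val', Matrix.cons_val_zero,
      Matrix.cons_val_one, Matrix.head_cons, Matrix.empty_val', Matrix.cons_val_fin_one,
      Matrix.head_fin_const, Matrix.of_apply] at e00 e01 e10
    have hv := sl2C_trace v
    obtain ⟨p1, p2, p3, p4⟩ := hprod g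
    refine Prod.ext ?_ ?_
    · show (w : Matrix (Fin 2) (Fin 2) ℂ) 0 0 =
        (-1 : ℂ) ^ (α g) * (v : Matrix (Fin 2) (Fin 2) ℂ) 0 0
      rw [hsign g]
      linear_combination e00 + ((v : Matrix (Fin 2) (Fin 2) ℂ) 1 0) * p4 -
        ((v : Matrix (Fin 2) (Fin 2) ℂ) 0 1) * p3 -
        ((ρ g : Matrix (Fin 2) (Fin 2) ℂ) 0 1 *
          (ρ g : Matrix (Fin 2) (Fin 2) ℂ) 1 0) * hv
    · show ![(w : Matrix (Fin 2) (Fin 2) ℂ) 0 1, (w : Matrix (Fin 2) (Fin 2) ℂ) 1 0] =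
        Complex.I ^ (α g) • ((Complex.I ^ (-α g) •
          MM (ρ g : Matrix (Fin 2) (Fin 2) ℂ)).mulVec
          ![(v : Matrix (Fin 2) (Fin 2) ℂ) 0 1, (v : Matrix (Fin 2) (Fin 2) ℂ) 1 0])
      rw [Matrix.smul_mulVec, smul_smul, ← zpow_add₀ Complex.I_ne_zero]
      simp only [add_neg_cancel, zpow_zero, one_smul]
      funext i
      fin_cases i <;>
        simp [Matrix.mulVec, dotProduct, Fin.sum_univ_two, MM]
      · linear_combination e01 + ((v : Matrix (Fin 2) (Fin 2) ℂ) 1 1 -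
          (v : Matrix (Fin 2) (Fin 2) ℂ) 0 0) * p1
      · linear_combination e10 + ((v : Matrix (Fin 2) (Fin 2) ℂ) 0 0 -
          (v : Matrix (Fin 2) (Fin 2) ℂ) 1 1) * p2
end

section
/- Let G be the group with presentation ⟨x₁, x₂, μ | μ x₁ μ⁻¹ = x₁ x₂⁻¹, μ x₂ x₁ μ⁻¹ = x₂⟩ (the Lin presentation of the figure eight knot group) and let ζ₅ = exp(2π√−1/5). Then for each k ∈ {1, 2} there exists a group homomorphism ρ_k: G → SL(2,ℂ) with ρ_k(x₁) = [[ζ₅^k,0],[0,ζ₅^{−k}]], ρ_k(x₂) = [[ζ₅^{2k},0],[0,ζ₅^{−2k}]], and ρ_k(μ) = J; each ρ_k is irreducible, and ρ₁ and ρ₂ are not conjugate in SL(2,ℂ). -/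
open Matrix

/-- The relators of the Lin presentation
`⟨x₁, x₂, μ | μ x₁ μ⁻¹ = x₁ x₂⁻¹, μ x₂ x₁ μ⁻¹ = x₂⟩` of the figure eight knot group,
with `x₁, x₂, μ` the generators `0, 1, 2`. -/
def fig8Rels : Set (FreeGroup (Fin 3)) :=
  { (FreeGroup.of 2) * (FreeGroup.of 0) * (FreeGroup.of 2)⁻¹ *
      ((FreeGroup.of 0) * (FreeGroup.of 1)⁻¹)⁻¹,
    (FreeGroup.of 2) * (FreeGroup.of 1) * (FreeGroup.of 0) * (FreeGroup.of 2)⁻¹ *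
      (FreeGroup.of 1)⁻¹ }

/-- The figure eight knot group via its Lin presentation. -/
def Fig8Group : Type := PresentedGroup fig8Rels

instance : Group Fig8Group := by unfold Fig8Group; infer_instance

noncomputable def diagSL (a : ℂ) (ha : a ≠ 0) : SL2C :=
  ⟨!![a, 0; 0, a⁻¹], by simp [Matrix.det_fin_two_of, mul_inv_cancel₀ ha]⟩

def Jmat : SL2C := ⟨!![0, 1; -1, 0], by simp [Matrix.det_fin_two_of]⟩

noncomputable def fgen (a : ℂ) (ha : a ≠ 0) : Fin 3 → SL2C :=
  ![diagSL a ha, diagSL (a ^ 2) (pow_ne_zero _ ha), Jmat]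

lemma rel_holds (a : ℂ) (ha : a ≠ 0) (ha5 : a ^ 5 = 1) :
    ∀ r ∈ fig8Rels, FreeGroup.lift (fgen a ha) r = 1 := by
  intro r hr
  rcases hr with hr | hr <;> subst hr <;>
  · simp only [_root_.map_mul, map_inv, FreeGroup.lift_apply_of, fgen, Matrix.cons_val_zero,
      Matrix.cons_val_one, Matrix.head_cons]
    ext i j
    simp only [Matrix.SpecialLinearGroup.coe_mul, Matrix.SpecialLinearGroup.coe_inv]
    fin_cases i <;> fin_cases j <;>
      simp [diagSL, Jmat, Matrix.SpecialLinearGroup.coe_mul, Matrix.SpecialLinearGroup.coe_inv,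
        Matrix.adjugate_fin_two, Matrix.mul_fin_two, Matrix.mul_apply, Fin.sum_univ_two] <;>
      (try field_simp) <;> first
        | linear_combination ha5 | linear_combination -ha5
        | linear_combination 2*ha5 | linear_combination -2*ha5
        | ring

noncomputable def mkRep (a : ℂ) (ha : a ≠ 0) (ha5 : a ^ 5 = 1) : Fig8Group →* SL2C :=
  PresentedGroup.toGroup (rel_holds a ha ha5)

lemma mkRep_of0 (a : ℂ) (ha : a ≠ 0) (ha5 : a ^ 5 = 1) :
    ((mkRep a ha ha5 (PresentedGroup.of 0) : SL2C) : Matrix (Fin 2) (Fin 2) ℂ) =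
      !![a, 0; 0, a⁻¹] := by
  have h : (mkRep a ha ha5) (PresentedGroup.of 0) = fgen a ha 0 :=
    PresentedGroup.toGroup.of _
  rw [h]; rfl

lemma mkRep_of1 (a : ℂ) (ha : a ≠ 0) (ha5 : a ^ 5 = 1) :
    ((mkRep a ha ha5 (PresentedGroup.of 1) : SL2C) : Matrix (Fin 2) (Fin 2) ℂ) =
      !![a ^ 2, 0; 0, (a ^ 2)⁻¹] := by
  have h : (mkRep a ha ha5) (PresentedGroup.of 1) = fgen a ha 1 :=
    PresentedGroup.toGroup.of _
  rw [h]; rfl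

lemma mkRep_of2 (a : ℂ) (ha : a ≠ 0) (ha5 : a ^ 5 = 1) :
    ((mkRep a ha ha5 (PresentedGroup.of 2) : SL2C) : Matrix (Fin 2) (Fin 2) ℂ) =
      !![0, 1; -1, 0] := by
  have h : (mkRep a ha ha5) (PresentedGroup.of 2) = fgen a ha 2 :=
    PresentedGroup.toGroup.of _
  rw [h]; rfl

lemma irred_aux (a : ℂ) (ha : a ≠ 0) (ha2 : a ^ 2 ≠ 1) (ρ : Fig8Group →* SL2C)
    (h0 : ((ρ (PresentedGroup.of 0) : SL2C) : Matrix (Fin 2) (Fin 2) ℂ) = !![a, 0; 0, a⁻¹])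
    (h2 : ((ρ (PresentedGroup.of 2) : SL2C) : Matrix (Fin 2) (Fin 2) ℂ) = !![0, 1; -1, 0])
    (W : Submodule ℂ (Fin 2 → ℂ)) (hW : Module.finrank ℂ W = 1) :
    ¬ ∀ g : Fig8Group, ∀ w ∈ W, (ρ g : Matrix (Fin 2) (Fin 2) ℂ).mulVec w ∈ W := by
  intro hinv
  obtain ⟨v, hv0, hvspan⟩ := finrank_eq_one_iff'.mp hW
  -- action of the diagonal generator
  have hmemA := hinv (PresentedGroup.of 0) (v : Fin 2 → ℂ) v.2
  have hmemJ := hinv (PresentedGroup.of 2) (v : Fin 2 → ℂ) v.2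
  rw [h0] at hmemA
  rw [h2] at hmemJ
  obtain ⟨c, hc⟩ := hvspan ⟨_, hmemA⟩
  obtain ⟨d, hd⟩ := hvspan ⟨_, hmemJ⟩
  have hc' : c • (v : Fin 2 → ℂ) = (!![a, 0; 0, a⁻¹]).mulVec (v : Fin 2 → ℂ) :=
    congrArg Subtype.val hc
  have hd' : d • (v : Fin 2 → ℂ) = (!![0, 1; -1, 0]).mulVec (v : Fin 2 → ℂ) :=
    congrArg Subtype.val hd
  have hc0 : c * (v : Fin 2 → ℂ) 0 = a * (v : Fin 2 → ℂ) 0 := by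
    have := congrFun hc' 0
    simpa [Matrix.mulVec, dotProduct, Fin.sum_univ_two] using this
  have hc1 : c * (v : Fin 2 → ℂ) 1 = a⁻¹ * (v : Fin 2 → ℂ) 1 := by
    have := congrFun hc' 1
    simpa [Matrix.mulVec, dotProduct, Fin.sum_univ_two] using this
  have hd0 : d * (v : Fin 2 → ℂ) 0 = (v : Fin 2 → ℂ) 1 := by
    have := congrFun hd' 0
    simpa [Matrix.mulVec, dotProduct, Fin.sum_univ_two] using this
  have hd1 : d * (v : Fin 2 → ℂ) 1 = -(v : Fin 2 → ℂ) 0 := by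
    have := congrFun hd' 1
    simpa [Matrix.mulVec, dotProduct, Fin.sum_univ_two] using this
  have hvne : (v : Fin 2 → ℂ) ≠ 0 := by
    intro h
    exact hv0 (Subtype.ext h)
  by_cases h0' : (v : Fin 2 → ℂ) 0 = 0
  · -- then v 1 = d * v 0 = 0, so v = 0
    have h1' : (v : Fin 2 → ℂ) 1 = 0 := by rw [← hd0, h0', mul_zero]
    apply hvne
    funext i
    fin_cases i <;> assumption
  · by_cases h1' : (v : Fin 2 → ℂ) 1 = 0
    · -- -v 0 = d * v 1 = 0
      have : -(v : Fin 2 → ℂ) 0 = 0 := by rw [← hd1, h1', mul_zero]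
      exact h0' (neg_eq_zero.mp this)
    · have hca : c = a := mul_right_cancel₀ h0' hc0
      have hca' : c = a⁻¹ := mul_right_cancel₀ h1' hc1
      have haa : a = a⁻¹ := hca ▸ hca'
      apply ha2
      rw [sq]
      nth_rewrite 2 [haa]
      exact mul_inv_cancel₀ ha

lemma trace_conj (P A : SL2C) :
    Matrix.trace ((P * A * P⁻¹ : SL2C) : Matrix (Fin 2) (Fin 2) ℂ) =
      Matrix.trace (A : Matrix (Fin 2) (Fin 2) ℂ) := by
  rw [Matrix.SpecialLinearGroup.coe_mul, Matrix.SpecialLinearGroup.coe_mul,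
    Matrix.trace_mul_comm, ← Matrix.mul_assoc, ← Matrix.SpecialLinearGroup.coe_mul,
    inv_mul_cancel, Matrix.SpecialLinearGroup.coe_one, Matrix.one_mul]

/-- with `ζ₅ = exp(2π√−1/5)`, for each `k ∈ {1,2}` there is a
homomorphism `ρₖ` from the Lin-presented figure eight knot group to `SL(2,ℂ)` with
`ρₖ(x₁) = diag(ζ₅ᵏ, ζ₅⁻ᵏ)`, `ρₖ(x₂) = diag(ζ₅²ᵏ, ζ₅⁻²ᵏ)`, `ρₖ(μ) = [[0,1],[-1,0]]`;
each `ρₖ` is irreducible, and `ρ₁, ρ₂` are not conjugate in `SL(2,ℂ)`. -/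
theorem stmt13 (ζ : ℂ) (hζ : ζ = Complex.exp (2 * Real.pi * Complex.I / 5)) :
    ∃ ρ₁ ρ₂ : Fig8Group →* SL2C,
      (∀ k : Fin 2, ∀ ρ : Fig8Group →* SL2C, ρ = [ρ₁, ρ₂].get k →
        ((ρ (PresentedGroup.of (0 : Fin 3)) : Matrix (Fin 2) (Fin 2) ℂ) =
          !![ζ ^ ((k : ℕ) + 1), 0; 0, (ζ ^ ((k : ℕ) + 1))⁻¹]) ∧
        ((ρ (PresentedGroup.of (1 : Fin 3)) : Matrix (Fin 2) (Fin 2) ℂ) =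
          !![ζ ^ (2 * ((k : ℕ) + 1)), 0; 0, (ζ ^ (2 * ((k : ℕ) + 1)))⁻¹]) ∧
        ((ρ (PresentedGroup.of (2 : Fin 3)) : Matrix (Fin 2) (Fin 2) ℂ) =
          !![0, 1; -1, 0]) ∧
        (∀ W : Submodule ℂ (Fin 2 → ℂ), Module.finrank ℂ W = 1 →
          ¬ ∀ g : Fig8Group, ∀ w ∈ W,
              (ρ g : Matrix (Fin 2) (Fin 2) ℂ).mulVec w ∈ W)) ∧
      ¬ ∃ P : SL2C, ∀ g : Fig8Group, ρ₂ g = P * ρ₁ g * P⁻¹ := by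
  have hπ : IsPrimitiveRoot ζ 5 := by
    rw [hζ]
    convert Complex.isPrimitiveRoot_exp 5 (by norm_num) using 3
    try norm_num
  have hζ0 : ζ ≠ 0 := hπ.ne_zero (by norm_num)
  have h5 : ζ ^ 5 = 1 := hπ.pow_eq_one
  have h5' : (ζ ^ 2) ^ 5 = 1 := by rw [← pow_mul, mul_comm, pow_mul, h5, one_pow]
  have hne1 : ζ ≠ 1 := hπ.ne_one (by norm_num)
  have hne2 : ζ ^ 2 ≠ 1 := hπ.pow_ne_one_of_pos_of_lt (by norm_num) (by norm_num)
  have hne3 : ζ ^ 3 ≠ 1 := hπ.pow_ne_one_of_pos_of_lt (by norm_num) (by norm_num)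
  have hne4 : (ζ ^ 2) ^ 2 ≠ 1 := by
    rw [← pow_mul]
    exact hπ.pow_ne_one_of_pos_of_lt (by norm_num) (by norm_num)
  refine ⟨mkRep ζ hζ0 h5, mkRep (ζ ^ 2) (pow_ne_zero _ hζ0) h5', ?_, ?_⟩
  · intro k ρ hρ
    fin_cases k <;> subst hρ <;> simp only [List.get] <;>
      refine ⟨?_, ?_, mkRep_of2 _ _ _, ?_⟩
    · rw [mkRep_of0]; try norm_num
    · rw [mkRep_of1]; try norm_num
    · intro W hW
      exact irred_aux ζ hζ0 hne2 _ (mkRep_of0 _ _ _) (mkRep_of2 _ _ _) W hW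
    · rw [mkRep_of0]; try norm_num
    · rw [mkRep_of1]; rw [← pow_mul]; try norm_num
    · intro W hW
      exact irred_aux (ζ ^ 2) (pow_ne_zero _ hζ0) hne4 _ (mkRep_of0 _ _ _) (mkRep_of2 _ _ _) W hW
  · rintro ⟨P, hP⟩
    have h : Matrix.trace ((mkRep (ζ ^ 2) (pow_ne_zero _ hζ0) h5' (PresentedGroup.of 0) : SL2C) :
          Matrix (Fin 2) (Fin 2) ℂ) =
        Matrix.trace ((mkRep ζ hζ0 h5 (PresentedGroup.of 0) : SL2C) : Matrix (Fin 2) (Fin 2) ℂ) := by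
      rw [hP (PresentedGroup.of 0)]
      exact trace_conj P _
    rw [mkRep_of0, mkRep_of0] at h
    simp only [Matrix.trace_fin_two_of] at h
    -- h : ζ^2 + (ζ^2)⁻¹ = ζ + ζ⁻¹
    rw [inv_eq_one_div, inv_eq_one_div] at h
    field_simp at h
    have hΦ : ζ ^ 4 + ζ ^ 3 + ζ ^ 2 + ζ + 1 = 0 := by
      have h0 : (ζ - 1) * (ζ ^ 4 + ζ ^ 3 + ζ ^ 2 + ζ + 1) = 0 := by linear_combination h5
      rcases mul_eq_zero.mp h0 with hk | hk
      · exact absurd (sub_eq_zero.mp hk) hne1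
      · exact hk
    have hg : ζ ^ 3 + 2 * ζ + 2 = 0 := by linear_combination hΦ + ζ * h - h5
    have : (5 : ℂ) = 0 := by
      linear_combination (5 - ζ + 2 * ζ ^ 2) * hΦ + (-2 * ζ - ζ ^ 2 - 2 * ζ ^ 3) * hg
    norm_num at this
end

section
/- Let G be the group with presentation ⟨x₁, x₂, x₃, x₄, μ | μ x₁ μ⁻¹ = x₁ x₂⁻¹, μ x₂⁻¹ x₁ μ⁻¹ = x₃ x₂⁻¹, μ x₂⁻¹ x₃ μ⁻¹ = x₃ x₄⁻¹, μ x₄⁻¹ x₃ μ⁻¹ = x₄⁻¹⟩ (the Lin presentation of the 5₁ torus knot group) and let ζ₅ = exp(2π√−1/5). Then for each k ∈ {1, 2} there exists a group homomorphism ρ_k: G → SL(2,ℂ) with ρ_k(x_i) = [[ζ₅^{ki},0],[0,ζ₅^{−ki}]] for i = 1, 2, 3, 4 and ρ_k(μ) = J; each ρ_k is irreducible, and ρ₁ and ρ₂ are not conjugate in SL(2,ℂ). -/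
open Matrix

/-- The relators of the Lin presentation
`⟨x₁, x₂, x₃, x₄, μ | μ x₁ μ⁻¹ = x₁ x₂⁻¹, μ x₂⁻¹ x₁ μ⁻¹ = x₃ x₂⁻¹,
  μ x₂⁻¹ x₃ μ⁻¹ = x₃ x₄⁻¹, μ x₄⁻¹ x₃ μ⁻¹ = x₄⁻¹⟩` of the `5₁` (torus `(2,5)`) knot
group, with `x₁, x₂, x₃, x₄, μ` the generators `0, 1, 2, 3, 4`. -/
def fiveOneRels : Set (FreeGroup (Fin 5)) :=
  { (FreeGroup.of 4) * (FreeGroup.of 0) * (FreeGroup.of 4)⁻¹ *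
      ((FreeGroup.of 0) * (FreeGroup.of 1)⁻¹)⁻¹,
    (FreeGroup.of 4) * (FreeGroup.of 1)⁻¹ * (FreeGroup.of 0) * (FreeGroup.of 4)⁻¹ *
      ((FreeGroup.of 2) * (FreeGroup.of 1)⁻¹)⁻¹,
    (FreeGroup.of 4) * (FreeGroup.of 1)⁻¹ * (FreeGroup.of 2) * (FreeGroup.of 4)⁻¹ *
      ((FreeGroup.of 2) * (FreeGroup.of 3)⁻¹)⁻¹,
    (FreeGroup.of 4) * (FreeGroup.of 3)⁻¹ * (FreeGroup.of 2) * (FreeGroup.of 4)⁻¹ *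
      (((FreeGroup.of 3))⁻¹)⁻¹ }

/-- The `5₁` knot group via its Lin presentation. -/
def FiveOneGroup : Type := PresentedGroup fiveOneRels

instance : Group FiveOneGroup := by unfold FiveOneGroup; infer_instance


namespace S14

noncomputable def Dm (a : ℂ) (ha : a ≠ 0) : SL2C :=
  ⟨!![a, 0; 0, a⁻¹], by simp [Matrix.det_fin_two_of, mul_inv_cancel₀ ha]⟩

def Jm : SL2C := ⟨!![0, 1; -1, 0], by simp [Matrix.det_fin_two_of]⟩

noncomputable def fgen (a : ℂ) (ha : a ≠ 0) : Fin 5 → SL2C :=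
  ![Dm a ha, Dm (a^2) (pow_ne_zero 2 ha), Dm (a^3) (pow_ne_zero 3 ha),
    Dm (a^4) (pow_ne_zero 4 ha), Jm]

lemma rels_hold (a : ℂ) (ha : a ≠ 0) (h5 : a ^ 5 = 1) :
    ∀ r ∈ fiveOneRels, FreeGroup.lift (fgen a ha) r = 1 := by
  intro r hr
  simp only [fiveOneRels, Set.mem_insert_iff, Set.mem_singleton_iff] at hr
  rcases hr with rfl | rfl | rfl | rfl <;>
  · simp only [_root_.map_mul, _root_.map_inv, FreeGroup.lift_apply_of]
    apply Subtype.ext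
    simp only [fgen, Dm, Jm, Matrix.cons_val_zero, Matrix.cons_val_one, Matrix.head_cons,
      Matrix.cons_val_fin_one, Matrix.SpecialLinearGroup.coe_mul, Matrix.SpecialLinearGroup.coe_inv,
      Matrix.adjugate_fin_two_of, Matrix.SpecialLinearGroup.coe_one]
    rw [Matrix.one_fin_two]
    simp [Matrix.mul_fin_two]
    constructor
    all_goals field_simp
    all_goals first
        | ring1
        | linear_combination (a^3 : ℂ) * h5
        | linear_combination (-(a^3) : ℂ) * h5
        | linear_combination h5
        | linear_combination (-1 : ℂ) * h5

end S14

namespace S14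

noncomputable def rep (a : ℂ) (ha : a ≠ 0) (h5 : a ^ 5 = 1) : FiveOneGroup →* SL2C :=
  PresentedGroup.toGroup (rels_hold a ha h5)

lemma rep_of (a : ℂ) (ha : a ≠ 0) (h5 : a ^ 5 = 1) (i : Fin 5) :
    rep a ha h5 (PresentedGroup.of i) = fgen a ha i :=
  PresentedGroup.toGroup.of _

lemma mem_scal {W : Submodule ℂ (Fin 2 → ℂ)} (hW : Module.finrank ℂ W = 1)
    {w : Fin 2 → ℂ} (hwW : w ∈ W) (hw0 : w ≠ 0) {u : Fin 2 → ℂ} (hu : u ∈ W) :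
    ∃ c : ℂ, u = c • w := by
  have nz : (⟨w, hwW⟩ : W) ≠ 0 := fun h => hw0 (by simpa using congrArg Subtype.val h)
  obtain ⟨c, hc⟩ := (finrank_eq_one_iff_of_nonzero' (⟨w, hwW⟩ : W) nz).mp hW ⟨u, hu⟩
  exact ⟨c, (congrArg Subtype.val hc).symm⟩

lemma irred (a : ℂ) (ha : a ≠ 0) (h5 : a ^ 5 = 1) (ha2 : a ^ 2 ≠ 1)
    (W : Submodule ℂ (Fin 2 → ℂ)) (hW : Module.finrank ℂ W = 1)
    (hInv : ∀ g : FiveOneGroup, ∀ w ∈ W,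
      (rep a ha h5 g : Matrix (Fin 2) (Fin 2) ℂ).mulVec w ∈ W) : False := by
  have hWbot : W ≠ ⊥ := by
    intro h; rw [h] at hW; simp at hW
  obtain ⟨w, hwW, hw0⟩ := Submodule.exists_mem_ne_zero_of_ne_bot hWbot
  -- invariance under diag(a, a⁻¹)
  have hD := hInv (PresentedGroup.of (0 : Fin 5)) w hwW
  rw [rep_of] at hD
  have hDm : ((fgen a ha 0 : SL2C) : Matrix (Fin 2) (Fin 2) ℂ).mulVec w
      = ![a * w 0, a⁻¹ * w 1] := by
    funext i
    fin_cases i <;>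
      simp [fgen, Dm, Matrix.mulVec, dotProduct, Fin.sum_univ_two]
  rw [hDm] at hD
  obtain ⟨c, hc⟩ := mem_scal hW hwW hw0 hD
  have h0 : a * w 0 = c * w 0 := by simpa using congrFun hc 0
  have h1 : a⁻¹ * w 1 = c * w 1 := by simpa using congrFun hc 1
  -- invariance under J
  have hJ := hInv (PresentedGroup.of (4 : Fin 5)) w hwW
  rw [rep_of] at hJ
  have hJm : ((fgen a ha 4 : SL2C) : Matrix (Fin 2) (Fin 2) ℂ).mulVec w
      = ![w 1, -(w 0)] := by
    funext i
    fin_cases i <;>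
      simp [fgen, Jm, Matrix.mulVec, dotProduct, Fin.sum_univ_two]
  rw [hJm] at hJ
  obtain ⟨d, hd⟩ := mem_scal hW hwW hw0 hJ
  have j0 : w 1 = d * w 0 := by simpa using congrFun hd 0
  have j1 : -(w 0) = d * w 1 := by simpa using congrFun hd 1
  have hzero : w 0 = 0 ∨ w 1 = 0 := by
    by_contra h
    push_neg at h
    have e0 : a = c := mul_right_cancel₀ h.1 h0
    have e1 : a⁻¹ = c := mul_right_cancel₀ h.2 h1
    have e2 : a = a⁻¹ := e0.trans e1.symm
    exact ha2 (by rw [sq]; nth_rewrite 1 [e2]; rw [inv_mul_cancel₀ ha])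
  rcases hzero with hz | hz
  · have hw1 : w 1 ≠ 0 := by
      intro h1z
      apply hw0
      funext i; fin_cases i <;> assumption
    rw [hz, mul_zero] at j0
    exact hw1 j0
  · have hw00 : w 0 = 0 := by
      rw [hz, mul_zero] at j1
      simpa using neg_eq_zero.mp j1
    apply hw0
    funext i; fin_cases i <;> assumption

end S14

/-- with `ζ₅ = exp(2π√−1/5)`, for each `k ∈ {1,2}` there is a
homomorphism `ρₖ` from the Lin-presented `5₁` knot group to `SL(2,ℂ)` with
`ρₖ(xᵢ) = diag(ζ₅^{ki}, ζ₅^{−ki})` for `i = 1,…,4` and `ρₖ(μ) = [[0,1],[-1,0]]`;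
each `ρₖ` is irreducible, and `ρ₁, ρ₂` are not conjugate in `SL(2,ℂ)`. -/
theorem stmt14 (ζ : ℂ) (hζ : ζ = Complex.exp (2 * Real.pi * Complex.I / 5)) :
    ∃ ρ₁ ρ₂ : FiveOneGroup →* SL2C,
      (∀ k : Fin 2, ∀ ρ : FiveOneGroup →* SL2C, ρ = [ρ₁, ρ₂].get k →
        (∀ i : Fin 4,
          (ρ (PresentedGroup.of i.castSucc) : Matrix (Fin 2) (Fin 2) ℂ) =
            !![ζ ^ (((k : ℕ) + 1) * ((i : ℕ) + 1)), 0;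
               0, (ζ ^ (((k : ℕ) + 1) * ((i : ℕ) + 1)))⁻¹]) ∧
        ((ρ (PresentedGroup.of (4 : Fin 5)) : Matrix (Fin 2) (Fin 2) ℂ) =
          !![0, 1; -1, 0]) ∧
        (∀ W : Submodule ℂ (Fin 2 → ℂ), Module.finrank ℂ W = 1 →
          ¬ ∀ g : FiveOneGroup, ∀ w ∈ W,
              (ρ g : Matrix (Fin 2) (Fin 2) ℂ).mulVec w ∈ W)) ∧
      ¬ ∃ P : SL2C, ∀ g : FiveOneGroup, ρ₂ g = P * ρ₁ g * P⁻¹ := by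
  have hprim : IsPrimitiveRoot ζ 5 := by
    rw [hζ]; exact Complex.isPrimitiveRoot_exp 5 (by norm_num)
  have h5 : ζ ^ 5 = 1 := hprim.pow_eq_one
  have hζ0 : ζ ≠ 0 := fun h => by simp [h] at h5
  have hne : ∀ m : ℕ, 0 < m → m < 5 → ζ ^ m ≠ 1 := fun m h1 h2 =>
    hprim.pow_ne_one_of_pos_of_lt h1.ne' h2
  have h52 : (ζ ^ 2) ^ 5 = 1 := by rw [← pow_mul, mul_comm, pow_mul, h5, one_pow]
  refine ⟨S14.rep ζ hζ0 h5, S14.rep (ζ ^ 2) (pow_ne_zero 2 hζ0) h52, ?_, ?_⟩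
  · intro k ρ hρ
    fin_cases k <;> simp only [List.get] at hρ <;> subst hρ
    · refine ⟨?_, ?_, ?_⟩
      · intro i
        fin_cases i <;>
        · rw [S14.rep_of]
          simp [S14.fgen, S14.Dm, Fin.castSucc, Fin.castAdd, Fin.castLE]
      · rw [S14.rep_of]; rfl
      · intro W hW hInv
        exact S14.irred ζ hζ0 h5 (hne 2 (by norm_num) (by norm_num)) W hW hInv
    · refine ⟨?_, ?_, ?_⟩
      · intro i
        fin_cases i <;>
        · rw [S14.rep_of]
          simp [S14.fgen, S14.Dm, Fin.castSucc, Fin.castAdd, Fin.castLE, ← pow_mul]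
      · rw [S14.rep_of]; rfl
      · intro W hW hInv
        refine S14.irred (ζ^2) (pow_ne_zero 2 hζ0) h52 ?_ W hW hInv
        rw [← pow_mul]
        exact hne 4 (by norm_num) (by norm_num)
  · rintro ⟨P, hP⟩
    have h := hP (PresentedGroup.of (0 : Fin 5))
    rw [S14.rep_of, S14.rep_of] at h
    have hval := congrArg (fun M : SL2C => (M : Matrix (Fin 2) (Fin 2) ℂ)) h
    simp only [Matrix.SpecialLinearGroup.coe_mul] at hval
    have htr := congrArg Matrix.trace hval
    rw [Matrix.trace_mul_comm, ← Matrix.mul_assoc, ← Matrix.SpecialLinearGroup.coe_mul,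
      inv_mul_cancel, Matrix.SpecialLinearGroup.coe_one, Matrix.one_mul] at htr
    have hc : ζ ^ 2 + (ζ ^ 2)⁻¹ = ζ + ζ⁻¹ := by
      simpa [S14.fgen, S14.Dm, Matrix.trace_fin_two_of] using htr
    have i1 : ζ⁻¹ = ζ ^ 4 := inv_eq_of_mul_eq_one_right (by linear_combination h5)
    have i2 : (ζ ^ 2)⁻¹ = ζ ^ 3 := inv_eq_of_mul_eq_one_right (by linear_combination h5)
    rw [i1, i2] at hc
    have hfac : ζ * (ζ - 1) ^ 2 * (ζ + 1) = 0 := by linear_combination -hc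
    rcases mul_eq_zero.mp hfac with h' | h'
    · rcases mul_eq_zero.mp h' with h'' | h''
      · exact hζ0 h''
      · have hz1 : ζ = 1 := by
          have h3 := pow_eq_zero_iff (n := 2) (by norm_num) |>.mp h''
          have := sub_eq_zero.mp h3
          exact this
        exact hne 1 (by norm_num) (by norm_num) (by rw [pow_one, hz1])
    · have hz : ζ = -1 := eq_neg_of_add_eq_zero_left h'
      exact hne 2 (by norm_num) (by norm_num) (by rw [hz]; norm_num)
end
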